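/- Let f: k³ → k³ be a bijective orthogonal linear map over a field k (i.e., f(α)·f(β) = α·β for all α, β). Then the map Δ_f on the Zorn vector matrix algebra over k given by Δ_f([[a,α],[β,b]]) = [[a, f(α)],[f(β), b]] is a k-algebra automorphism if and only if f preserves the cross product: f(α × β) = f(α) × f(β) for all α, β ∈ k³. -/
import Mathlib


/-- Zorn vector matrices `[[a, α], [β, b]]` over a field `k`. -/
@[ext]
structure Zorn (k : Type*) where
  a : k
  α : Fin 3 → k
  β : Fin 3 → k
  b : k

namespace Zorn

variable {k : Type*} [Field k]

/-- Dot product on `k³`. -/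
def dot (u v : Fin 3 → k) : k := u 0 * v 0 + u 1 * v 1 + u 2 * v 2

/-- Cross product on `k³`. -/
def cross (u v : Fin 3 → k) : Fin 3 → k :=
  ![u 1 * v 2 - u 2 * v 1, u 2 * v 0 - u 0 * v 2, u 0 * v 1 - u 1 * v 0]

/-- Zorn vector matrix multiplication. -/
instance : Mul (Zorn k) :=
  ⟨fun x y =>
    ⟨x.a * y.a + dot x.α y.β,
     fun i => x.a * y.α i + y.b * x.α i - cross x.β y.β i,
     fun i => y.a * x.β i + x.b * y.β i + cross x.α y.α i,
     dot x.β y.α + x.b * y.b⟩⟩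

instance : One (Zorn k) := ⟨⟨1, 0, 0, 1⟩⟩
instance : Zero (Zorn k) := ⟨⟨0, 0, 0, 0⟩⟩
instance : Add (Zorn k) := ⟨fun x y => ⟨x.a + y.a, x.α + y.α, x.β + y.β, x.b + y.b⟩⟩
instance : Neg (Zorn k) := ⟨fun x => ⟨-x.a, -x.α, -x.β, -x.b⟩⟩
instance : SMul k (Zorn k) := ⟨fun c x => ⟨c * x.a, c • x.α, c • x.β, c * x.b⟩⟩

/-- The norm (determinant) of a Zorn vector matrix. -/
def N (x : Zorn k) : k := x.a * x.b - dot x.α x.β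

/-- The bilinear form associated with the norm. -/
def polarN (x y : Zorn k) : k := N (x + y) - N x - N y


/-- For a bijective orthogonal linear map `f : k³ → k³`, the map
`Δ_f [[a,α],[β,b]] = [[a,f(α)],[f(β),b]]` is a `k`-algebra automorphism of the Zorn
algebra iff `f` preserves the cross product. -/
theorem diag_automorphism_iff (f : (Fin 3 → k) →ₗ[k] (Fin 3 → k))
    (hf_bij : Function.Bijective f)
    (hf_orth : ∀ u v : Fin 3 → k, dot (f u) (f v) = dot u v) :
    (Function.Bijective (fun x : Zorn k => (⟨x.a, f x.α, f x.β, x.b⟩ : Zorn k)) ∧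
     (∀ x y : Zorn k, (⟨(x + y).a, f (x + y).α, f (x + y).β, (x + y).b⟩ : Zorn k)
        = (⟨x.a, f x.α, f x.β, x.b⟩ : Zorn k) + ⟨y.a, f y.α, f y.β, y.b⟩) ∧
     (∀ (c : k) (x : Zorn k), (⟨(c • x).a, f (c • x).α, f (c • x).β, (c • x).b⟩ : Zorn k)
        = c • (⟨x.a, f x.α, f x.β, x.b⟩ : Zorn k)) ∧
     (⟨(1 : Zorn k).a, f (1 : Zorn k).α, f (1 : Zorn k).β, (1 : Zorn k).b⟩ : Zorn k) = 1 ∧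
     (∀ x y : Zorn k, (⟨(x * y).a, f (x * y).α, f (x * y).β, (x * y).b⟩ : Zorn k)
        = (⟨x.a, f x.α, f x.β, x.b⟩ : Zorn k) * ⟨y.a, f y.α, f y.β, y.b⟩))
    ↔ ∀ u v : Fin 3 → k, f (cross u v) = cross (f u) (f v) := by
  constructor
  · rintro ⟨-, -, -, -, hmul⟩ u v
    have h := hmul ⟨0, 0, u, 0⟩ ⟨0, 0, v, 0⟩
    have hα := congrArg Zorn.α h
    have this : f (fun i => (0:k) * (0:Fin 3 → k) i + 0 * (0:Fin 3 → k) i - cross u v i)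
        = fun i => (0:k) * f (0:Fin 3 → k) i + 0 * f (0:Fin 3 → k) i - cross (f u) (f v) i := hα
    have e1 : (fun i => (0:k) * (0:Fin 3 → k) i + 0 * (0:Fin 3 → k) i - cross u v i)
        = -(cross u v) := by funext i; simp
    have e2 : (fun i => (0:k) * f (0:Fin 3 → k) i + 0 * f (0:Fin 3 → k) i - cross (f u) (f v) i)
        = -(cross (f u) (f v)) := by funext i; simp
    rw [e1, e2, map_neg, neg_inj] at this
    exact this
  · intro hcross
    refine ⟨⟨fun x y hxy => ?_, fun y => ?_⟩, fun x y => ?_, fun c x => ?_, ?_, fun x y => ?_⟩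
    · have ha := congrArg Zorn.a hxy
      have hα := congrArg Zorn.α hxy
      have hβ := congrArg Zorn.β hxy
      have hb := congrArg Zorn.b hxy
      ext1
      · exact ha
      · exact hf_bij.injective hα
      · exact hf_bij.injective hβ
      · exact hb
    · obtain ⟨u, hu⟩ := hf_bij.surjective y.α
      obtain ⟨w, hw⟩ := hf_bij.surjective y.β
      exact ⟨⟨y.a, u, w, y.b⟩, by simp [hu, hw]⟩
    · show (⟨x.a + y.a, f (x.α + y.α), f (x.β + y.β), x.b + y.b⟩ : Zorn k)
        = ⟨x.a + y.a, f x.α + f y.α, f x.β + f y.β, x.b + y.b⟩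
      rw [map_add, map_add]
    · show (⟨c * x.a, f (c • x.α), f (c • x.β), c * x.b⟩ : Zorn k)
        = ⟨c * x.a, c • f x.α, c • f x.β, c * x.b⟩
      rw [map_smul, map_smul]
    · show (⟨(1:k), f 0, f 0, 1⟩ : Zorn k) = ⟨1, 0, 0, 1⟩
      rw [map_zero]
    · refine Zorn.ext ?_ ?_ ?_ ?_
      · show x.a * y.a + dot x.α y.β = x.a * y.a + dot (f x.α) (f y.β)
        rw [hf_orth]
      · show f (fun i => x.a * y.α i + y.b * x.α i - cross x.β y.β i)
          = fun i => x.a * f y.α i + y.b * f x.α i - cross (f x.β) (f y.β) i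
        have e : (fun i => x.a * y.α i + y.b * x.α i - cross x.β y.β i)
            = x.a • y.α + y.b • x.α - cross x.β y.β := by funext i; simp
        rw [e, map_sub, map_add, map_smul, map_smul, hcross]
        funext i; simp
      · show f (fun i => y.a * x.β i + x.b * y.β i + cross x.α y.α i)
          = fun i => y.a * f x.β i + x.b * f y.β i + cross (f x.α) (f y.α) i
        have e : (fun i => y.a * x.β i + x.b * y.β i + cross x.α y.α i)
            = y.a • x.β + x.b • y.β + cross x.α y.α := by funext i; simp
        rw [e, map_add, map_add, map_smul, map_smul, hcross]
        funext i; simp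
      · show dot x.β y.α + x.b * y.b = dot (f x.β) (f y.α) + x.b * y.b
        rw [hf_orth]

end Zorn
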